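/- Let q > 1, κ ≥ 0 be reals and α, β ∈ ℂ with αβ = q, α + β ∈ ℝ, |α + β| ≤ q + 1. Then for any w ∈ ℂ, |w − αq^κ|²·|w − βq^κ|² − |1 − αq^κ w|²·|1 − βq^κ w|² = (1 − q^{2κ+1})·(|w|² − 1)·((1 + q^{2κ+1})(|w|² + 1) − (α+β)q^κ·(w + conj(w))). -/

import Mathlib

theorem stmt_5 (q κ : ℝ) (hq : 1 < q) (hκ : 0 ≤ κ) (α β : ℂ)
    (hprod : α * β = (q : ℂ)) (hre : (α + β).im = 0) (w : ℂ) :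
    ‖w - α * ((q ^ κ : ℝ) : ℂ)‖ ^ 2 * ‖w - β * ((q ^ κ : ℝ) : ℂ)‖ ^ 2
      - ‖1 - α * ((q ^ κ : ℝ) : ℂ) * w‖ ^ 2
          * ‖1 - β * ((q ^ κ : ℝ) : ℂ) * w‖ ^ 2
    = (1 - q ^ (2 * κ + 1)) * (‖w‖ ^ 2 - 1) *
        ((1 + q ^ (2 * κ + 1)) * (‖w‖ ^ 2 + 1)
          - (α + β).re * q ^ κ * (w + (starRingEnd ℂ) w).re) := by
  have hq0 : (0:ℝ) < q := lt_trans one_pos hq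
  set t : ℝ := q ^ κ with ht
  have hpow : q ^ (2 * κ + 1) = t ^ 2 * q := by
    rw [ht, show (2:ℝ) * κ + 1 = κ * 2 + 1 by ring, Real.rpow_add hq0, Real.rpow_one,
      Real.rpow_mul hq0.le]
    rw [show ((2:ℝ)) = ((2:ℕ):ℝ) by norm_num, Real.rpow_natCast]
  set s : ℂ := α + β with hsdef
  have hs : (starRingEnd ℂ) s = s := Complex.conj_eq_iff_im.mpr hre
  have hsre : ((s.re : ℝ) : ℂ) = s := Complex.conj_eq_iff_re.mp hs
  have hwre : (((w + (starRingEnd ℂ) w).re : ℝ) : ℂ) = w + (starRingEnd ℂ) w := by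
    apply Complex.conj_eq_iff_re.mp
    simp only [map_add, Complex.conj_conj]
    ring
  have hA : (w - α * (t:ℂ)) * (w - β * (t:ℂ)) = w ^ 2 - s * (t:ℂ) * w + (q:ℂ) * (t:ℂ) ^ 2 := by
    rw [hsdef]; linear_combination ((t:ℝ):ℂ) ^ 2 * hprod
  have hB : (1 - α * (t:ℂ) * w) * (1 - β * (t:ℂ) * w)
      = 1 - s * (t:ℂ) * w + (q:ℂ) * (t:ℂ) ^ 2 * w ^ 2 := by
    rw [hsdef]; linear_combination ((t:ℝ):ℂ) ^ 2 * w ^ 2 * hprod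
  rw [Complex.sq_norm, Complex.sq_norm, Complex.sq_norm, Complex.sq_norm, Complex.sq_norm,
    ← Complex.normSq_mul, ← Complex.normSq_mul, hA, hB, hpow]
  apply Complex.ofReal_injective
  push_cast [← Complex.mul_conj, hsre, hwre]
  simp only [map_sub, map_add, map_mul, map_one, map_pow, Complex.conj_ofReal, hs]
  ring
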